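/- For the set of multi-indices $GI = \{\bar\alpha=(\alpha_k)_{k=1}^\infty : \alpha_k\in\mathbb{Z}_{\ge0},\ \alpha_k=0 \text{ for all but finitely many } k\}$ with $|\bar\alpha|=\sum_k\alpha_k$ and $\|\bar\alpha\|=\sum_k k\alpha_k$, and for $\xi=(\xi_k)_{k=1}^\infty$ a sequence in a normed space, define $[\xi]^{\bar\alpha}=\prod_{\alpha_k>0}|\xi_k|^{\alpha_k}$ and $[[\xi]]_{d,n} = \big(\sum_{|\bar\alpha|=d,\ \|\bar\alpha\|=n}[\xi]^{2\bar\alpha}\big)^{1/2}$. Then for all $n\ge d\ge 1$ and $n'\ge d'\ge 1$: $[[\xi]]_{d,n}\cdot[[\xi]]_{d',n'} \le e^{d+d'}\,[[\xi]]_{d+d',\,n+n'}$. -/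

import Mathlib

open scoped BigOperators

/-- The homogeneous gauge `[[ξ]]_{d,n}` of a sequence `ξ = (ξ_k)_{k≥1}` (indexed here by
`k : ℕ` standing for the index `k+1`): the square root of the sum over multi-indices
`ᾱ ∈ GI` with `|ᾱ| = d` and `‖ᾱ‖ = n` of `[ξ]^{2ᾱ} = ∏ ‖ξ_k‖^{2α_k}`. -/
noncomputable def dinorm {V : Type*} [NormedAddCommGroup V] (ξ : ℕ → V) (d n : ℕ) : ℝ :=
  Real.sqrt (∑' α : {α : ℕ →₀ ℕ //
      (α.sum fun _ v => v) = d ∧ (α.sum fun k v => (k + 1) * v) = n},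
    ∏ k ∈ (α : ℕ →₀ ℕ).support, ‖ξ k‖ ^ (2 * (α : ℕ →₀ ℕ) k))

private abbrev GIS (d n : ℕ) : Type :=
  {α : ℕ →₀ ℕ // (α.sum fun _ v => v) = d ∧ (α.sum fun k v => (k + 1) * v) = n}

private lemma gi_key {n : ℕ} (α : ℕ →₀ ℕ) (hα : (α.sum fun k v => (k + 1) * v) = n)
    (k : ℕ) : (k + 1) * α k ≤ n := by
  by_cases hk : k ∈ α.support
  · calc (k + 1) * α k ≤ ∑ i ∈ α.support, (i + 1) * α i :=
        Finset.single_le_sum (f := fun i => (i + 1) * α i) (fun i _ => Nat.zero_le _) hk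
      _ = n := hα
  · simp [Finsupp.notMem_support_iff.mp hk]

private instance gi_finite (d n : ℕ) : Finite (GIS d n) := by
  apply Finite.of_injective
    (f := fun α : GIS d n =>
      (fun i : Fin n => (⟨(α : ℕ →₀ ℕ) i, by
        have := gi_key (α : ℕ →₀ ℕ) α.2.2 i
        have : (α : ℕ →₀ ℕ) i ≤ n := le_trans (Nat.le_mul_of_pos_left _ (Nat.succ_pos _)) this
        omega⟩ : Fin (n + 1))))
  rintro ⟨α, hα1, hα2⟩ ⟨β, hβ1, hβ2⟩ h
  ext1
  ext k
  by_cases hk : k < n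
  · simpa using congrFun h ⟨k, hk⟩
  · have h1 : α k = 0 := by
      by_contra h0
      have := gi_key α hα2 k
      nlinarith [Nat.one_le_iff_ne_zero.mpr h0]
    have h2 : β k = 0 := by
      by_contra h0
      have := gi_key β hβ2 k
      nlinarith [Nat.one_le_iff_ne_zero.mpr h0]
    rw [h1, h2]

private lemma gi_main {V : Type*} [NormedAddCommGroup V] (ξ : ℕ → V) (d n d' n' : ℕ) :
    (∑' α : GIS d n, ∏ k ∈ (α : ℕ →₀ ℕ).support, ‖ξ k‖ ^ (2 * (α : ℕ →₀ ℕ) k)) *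
    (∑' α : GIS d' n', ∏ k ∈ (α : ℕ →₀ ℕ).support, ‖ξ k‖ ^ (2 * (α : ℕ →₀ ℕ) k)) ≤
    Real.exp ((d : ℝ) + (d' : ℝ)) ^ 2 *
    (∑' α : GIS (d + d') (n + n'),
      ∏ k ∈ (α : ℕ →₀ ℕ).support, ‖ξ k‖ ^ (2 * (α : ℕ →₀ ℕ) k)) := by
  classical
  set f : (ℕ →₀ ℕ) → ℝ := fun α => ∏ k ∈ α.support, ‖ξ k‖ ^ (2 * α k) with hf
  have hf0 : ∀ α, 0 ≤ f α := fun α =>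
    Finset.prod_nonneg fun k _ => pow_nonneg (norm_nonneg _) _
  have hfprod : ∀ γ : ℕ →₀ ℕ, f γ = γ.prod fun k v => ‖ξ k‖ ^ (2 * v) := fun γ => rfl
  have hfadd : ∀ α β, f (α + β) = f α * f β := by
    intro α β
    rw [hfprod, hfprod, hfprod, Finsupp.prod_add_index']
    · intro a; simp
    · intro a b1 b2; rw [mul_add, pow_add]
  haveI : Fintype (GIS d n) := Fintype.ofFinite _
  haveI : Fintype (GIS d' n') := Fintype.ofFinite _
  haveI : Fintype (GIS (d + d') (n + n')) := Fintype.ofFinite _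
  rw [tsum_fintype, tsum_fintype, tsum_fintype]
  set E : ℝ := Real.exp ((d : ℝ) + (d' : ℝ)) with hE
  have hE1 : 1 ≤ E := by
    rw [hE]
    apply Real.one_le_exp
    positivity
  set F : GIS d n × GIS d' n' → GIS (d + d') (n + n') := fun p => ⟨p.1.1 + p.2.1, by
    constructor
    · rw [Finsupp.sum_add_index' (fun a => rfl) (fun a b1 b2 => rfl), p.1.2.1, p.2.2.1]
    · rw [Finsupp.sum_add_index' (fun a => mul_zero _) (fun a b1 b2 => mul_add _ _ _),
        p.1.2.2, p.2.2.2]⟩ with hF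
  -- fiber cardinality bound
  have card_bound : ∀ γ : GIS (d + d') (n + n'),
      ((Finset.univ.filter fun p : GIS d n × GIS d' n' => F p = γ).card : ℝ) ≤ E := by
    intro γ
    have hcard : (Finset.univ.filter fun p : GIS d n × GIS d' n' => F p = γ).card ≤
        (Finset.Iic γ.1).card := by
      apply Finset.card_le_card_of_injOn (fun p => p.1.1)
      · intro p hp
        simp only [Finset.mem_coe, Finset.mem_filter, Finset.mem_univ, true_and] at hp ⊢
        have : p.1.1 + p.2.1 = γ.1 := congrArg Subtype.val hp
        rw [Finset.mem_Iic, ← this]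
        exact self_le_add_right _ _
      · intro p hp q hq hpq
        simp only [Finset.mem_coe, Finset.mem_filter, Finset.mem_univ, true_and] at hp hq
        have hp' : p.1.1 + p.2.1 = γ.1 := congrArg Subtype.val hp
        have hq' : q.1.1 + q.2.1 = γ.1 := congrArg Subtype.val hq
        have hpq' : p.1.1 = q.1.1 := hpq
        have h1 : p.1 = q.1 := Subtype.ext hpq'
        have h2 : p.2 = q.2 := by
          apply Subtype.ext
          apply add_left_cancel (a := p.1.1)
          rw [hp', hpq']
          exact hq'.symm
        exact Prod.ext h1 h2
    have hIic : (Finset.Iic γ.1).card = ∏ i ∈ γ.1.support, (γ.1 i + 1) := by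
      rw [Finsupp.card_Iic]
      exact Finset.prod_congr rfl fun i _ => Nat.card_Iic _
    calc ((Finset.univ.filter fun p : GIS d n × GIS d' n' => F p = γ).card : ℝ)
        ≤ ((Finset.Iic γ.1).card : ℝ) := Nat.cast_le.mpr hcard
      _ = ∏ i ∈ γ.1.support, ((γ.1 i : ℝ) + 1) := by
          rw [hIic, Nat.cast_prod]
          exact Finset.prod_congr rfl fun i _ => by push_cast; ring
      _ ≤ ∏ i ∈ γ.1.support, Real.exp (γ.1 i : ℝ) := by
          apply Finset.prod_le_prod
          · intro i _; positivity
          · intro i _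
            have := Real.add_one_le_exp (γ.1 i : ℝ)
            linarith
      _ = Real.exp (∑ i ∈ γ.1.support, (γ.1 i : ℝ)) := (Real.exp_sum _ _).symm
      _ = E := by
          rw [hE]
          congr 1
          have h1 : ∑ a ∈ γ.1.support, γ.1 a = d + d' := by
            have := γ.2.1
            rwa [Finsupp.sum] at this
          exact_mod_cast h1
  calc (∑ α : GIS d n, f α.1) * (∑ β : GIS d' n', f β.1)
      = ∑ p : GIS d n × GIS d' n', f p.1.1 * f p.2.1 := by
        rw [Finset.sum_mul_sum]
        exact (Fintype.sum_prod_type fun p : GIS d n × GIS d' n' => f p.1.1 * f p.2.1).symm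
    _ = ∑ p : GIS d n × GIS d' n', f (F p).1 := by
        apply Finset.sum_congr rfl
        intro p _
        rw [← hfadd]
    _ = ∑ γ ∈ Finset.univ.image F,
          (Finset.univ.filter fun p : GIS d n × GIS d' n' => F p = γ).card • f γ.1 :=
        Finset.sum_comp (fun γ : GIS (d + d') (n + n') => f γ.1) F
    _ ≤ ∑ γ ∈ Finset.univ.image F, E ^ 2 * f γ.1 := by
        apply Finset.sum_le_sum
        intro γ _
        rw [nsmul_eq_mul]
        apply mul_le_mul_of_nonneg_right _ (hf0 _)
        calc ((Finset.univ.filter fun p : GIS d n × GIS d' n' => F p = γ).card : ℝ)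
            ≤ E := card_bound γ
          _ ≤ E ^ 2 := by nlinarith
    _ = E ^ 2 * ∑ γ ∈ Finset.univ.image F, f γ.1 := by rw [Finset.mul_sum]
    _ ≤ E ^ 2 * ∑ γ : GIS (d + d') (n + n'), f γ.1 := by
        apply mul_le_mul_of_nonneg_left _ (by positivity)
        apply Finset.sum_le_sum_of_subset_of_nonneg (Finset.subset_univ _)
        intro γ _ _
        exact hf0 _

/-- Multiplicative inequality for homogeneous gauges:
`[[ξ]]_{d,n} · [[ξ]]_{d',n'} ≤ e^{d+d'} [[ξ]]_{d+d', n+n'}`. -/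
theorem stmt_8 {V : Type*} [NormedAddCommGroup V] (ξ : ℕ → V)
    (d n d' n' : ℕ) (hd : 1 ≤ d) (hn : d ≤ n) (hd' : 1 ≤ d') (hn' : d' ≤ n') :
    dinorm ξ d n * dinorm ξ d' n' ≤
      Real.exp ((d : ℝ) + (d' : ℝ)) * dinorm ξ (d + d') (n + n') := by
  have key := gi_main ξ d n d' n'
  unfold dinorm
  have hA0 : 0 ≤ (∑' α : GIS d n,
      ∏ k ∈ (α : ℕ →₀ ℕ).support, ‖ξ k‖ ^ (2 * (α : ℕ →₀ ℕ) k)) := by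
    apply tsum_nonneg
    intro α
    exact Finset.prod_nonneg fun k _ => pow_nonneg (norm_nonneg _) _
  rw [← Real.sqrt_mul hA0]
  have hE0 : 0 ≤ Real.exp ((d : ℝ) + (d' : ℝ)) := Real.exp_nonneg _
  calc Real.sqrt (_ * _) ≤ Real.sqrt (Real.exp ((d : ℝ) + (d' : ℝ)) ^ 2 *
        (∑' α : GIS (d + d') (n + n'),
          ∏ k ∈ (α : ℕ →₀ ℕ).support, ‖ξ k‖ ^ (2 * (α : ℕ →₀ ℕ) k))) :=
      Real.sqrt_le_sqrt key
    _ = Real.exp ((d : ℝ) + (d' : ℝ)) * Real.sqrt _ := by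
        rw [Real.sqrt_mul (sq_nonneg _), Real.sqrt_sq hE0]
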